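/- arXiv:1704.06921 — 2 statements merged into one kernel-verified Lean document; each statement's English description precedes it below -/
import Mathlib

section
/- Let V be a nonempty countable set and b : P(V) → [0,∞] satisfy conditions (0), (1) symmetry, (2) submodularity, (3'), and (4). If X is an optimal s-t cut and u ≠ v ∈ X, then X_{u,v} ⊆ X or X_{v,u} ⊆ X, where X_{x,y} denotes the ⊆-smallest optimal x-y cut. -/
open Set Filter Topology ENNReal

noncomputable section

/-- `λ_b(u,v)`: the infimum of `b(X)` over all `u-v` cuts `X`
(sets with `u ∈ X` and `v ∉ X`). -/
def lamB {V : Type*} (b : Set V → ℝ≥0∞) (u v : V) : ℝ≥0∞ :=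
  ⨅ (X : Set V) (_ : u ∈ X ∧ v ∉ X), b X

/-- `X` is an optimal `u-v` cut: a `u-v` cut with `b(X) = λ_b(u,v)`. -/
def IsOptCut {V : Type*} (b : Set V → ℝ≥0∞) (u v : V) (X : Set V) : Prop :=
  u ∈ X ∧ v ∉ X ∧ b X = lamB b u v

lemma lamB_le {V : Type*} (b : Set V → ℝ≥0∞) {u v : V} {Y : Set V}
    (h : u ∈ Y ∧ v ∉ Y) : lamB b u v ≤ b Y :=
  iInf_le_of_le Y (iInf_le _ h)

lemma lamB_symm {V : Type*} (b : Set V → ℝ≥0∞) (h1 : ∀ X : Set V, b Xᶜ = b X)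
    (u v : V) : lamB b u v = lamB b v u := by
  have key : ∀ x y : V, lamB b x y ≤ lamB b y x := by
    intro x y
    refine le_iInf₂ fun Y hY => ?_
    have : lamB b x y ≤ b Yᶜ := lamB_le b ⟨by simpa using hY.2, by simpa using hY.1⟩
    simpa [h1 Y] using this
  exact le_antisymm (key u v) (key v u)

/-- Core uncrossing step. -/
lemma uncross_step {V : Type*} (b : Set V → ℝ≥0∞)
    (h2 : ∀ X Y : Set V, b (X ∩ Y) + b (X ∪ Y) ≤ b X + b Y)
    {s t u v : V} (hst : s ≠ t) {X W : Set V}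
    (hX : IsOptCut b s t X) (hbX : b X ≠ ⊤)
    (hW : IsLeast {Y : Set V | IsOptCut b u v Y} W)
    (ht : t ∉ W) (hu : u ∈ X) : W ⊆ X := by
  obtain ⟨hsX, htX, hbXeq⟩ := hX
  obtain ⟨⟨huW, hvW, hbW⟩, hmin⟩ := hW
  -- W ∪ X is an s-t cut
  have hcutU : s ∈ W ∪ X ∧ t ∉ W ∪ X := ⟨Or.inr hsX, fun h => h.elim ht htX⟩
  have hUge : b X ≤ b (W ∪ X) := hbXeq ▸ lamB_le b hcutU
  -- W ∩ X is a u-v cut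
  have hcutI : u ∈ W ∩ X ∧ v ∉ W ∩ X := ⟨⟨huW, hu⟩, fun h => hvW h.1⟩
  have h5 : b (W ∩ X) + b X ≤ b W + b X :=
    le_trans (add_le_add_right hUge _) (h2 W X)
  have h6 : b (W ∩ X) ≤ b W := (ENNReal.add_le_add_iff_right hbX).mp h5
  have hopt : IsOptCut b u v (W ∩ X) :=
    ⟨hcutI.1, hcutI.2, le_antisymm (le_trans h6 hbW.le) (lamB_le b hcutI)⟩
  exact (hmin hopt).trans inter_subset_right

/-- If `X` is an optimal `s-t` cut and `u ≠ v ∈ X`, then `X_{u,v} ⊆ X` or `X_{v,u} ⊆ X`,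
where `X_{x,y}` is the `⊆`-smallest optimal `x-y` cut. -/
theorem smallest_optimal_cut_subset {V : Type*} [Countable V] [Nonempty V]
    (b : Set V → ℝ≥0∞)
    (h0 : ∀ X : Set V, b X = 0 ↔ X = ∅ ∨ X = Set.univ)
    (h1 : ∀ X : Set V, b Xᶜ = b X)
    (h2 : ∀ X Y : Set V, b (X ∩ Y) + b (X ∪ Y) ≤ b X + b Y)
    (h3m : ∀ X : ℕ → Set V, Monotone X →
      b (⋃ n, X n) ≤ Filter.liminf (fun n => b (X n)) Filter.atTop)
    (h3a : ∀ X : ℕ → Set V, Antitone X →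
      b (⋂ n, X n) ≤ Filter.liminf (fun n => b (X n)) Filter.atTop)
    (h4 : ∀ u v : V, u ≠ v → lamB b u v < ⊤)
    (s t u v : V) (hst : s ≠ t) (huv : u ≠ v) (X : Set V)
    (hX : IsOptCut b s t X) (hu : u ∈ X) (hv : v ∈ X)
    (Xuv Xvu : Set V)
    (hXuv : IsLeast {Y : Set V | IsOptCut b u v Y} Xuv)
    (hXvu : IsLeast {Y : Set V | IsOptCut b v u Y} Xvu) :
    Xuv ⊆ X ∨ Xvu ⊆ X := by
  have hbX : b X ≠ ⊤ := by
    rw [hX.2.2]; exact (h4 s t hst).ne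
  by_cases ht : t ∈ Xuv
  · -- Xuvᶜ is an optimal v-u cut, so Xvu ⊆ Xuvᶜ, hence t ∉ Xvu
    right
    obtain ⟨⟨huW, hvW, hbW⟩, _⟩ := hXuv
    have hopt : IsOptCut b v u Xuvᶜ := by
      refine ⟨by simpa using hvW, by simpa using huW, ?_⟩
      rw [h1, hbW, lamB_symm b h1]
    have hsub : Xvu ⊆ Xuvᶜ := hXvu.2 hopt
    have ht' : t ∉ Xvu := fun h => (hsub h) ht
    exact uncross_step b h2 hst hX hbX hXvu ht' hv
  · exact Or.inl (uncross_step b h2 hst hX hbX hXuv ht hu)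
end
end

section
/- Let V be a nonempty countable set and b : P(V) → [0,∞] satisfy conditions (0), (1) symmetry, (2) submodularity, (3) monotone-continuity, and (4) finiteness of λ_b. For an optimal cut X, define the relation ≺_X on X by: u ≺_X v iff X_{u,v} ⊄ X, where X_{u,v} is the ⊆-smallest optimal u-v cut. Then ≺_X is a strict partial ordering on X (irreflexive and transitive). -/
open Set Filter Topology ENNReal

noncomputable section

lemma lamB_le_cut {V : Type*} (b : Set V → ℝ≥0∞) {u v : V} {Y : Set V}
    (hu : u ∈ Y) (hv : v ∉ Y) : lamB b u v ≤ b Y :=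
  iInf₂_le Y ⟨hu, hv⟩

lemma lamB_comm {V : Type*} {b : Set V → ℝ≥0∞} (h1 : ∀ X, b Xᶜ = b X) (u v : V) :
    lamB b u v = lamB b v u := by
  have key : ∀ a c : V, lamB b a c ≤ lamB b c a := by
    intro a c
    refine le_iInf₂ fun Y hY => ?_
    have h : lamB b a c ≤ b Yᶜ :=
      lamB_le_cut b (by simpa using hY.2) (by simpa using hY.1)
    simpa [h1 Y] using h
  exact le_antisymm (key u v) (key v u)

lemma uncross {V : Type*} {b : Set V → ℝ≥0∞}
    (h2 : ∀ X Y : Set V, b (X ∩ Y) + b (X ∪ Y) ≤ b X + b Y)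
    {A B : Set V} {l1 l2 : ℝ≥0∞}
    (hint : l1 ≤ b (A ∩ B)) (hun : l2 ≤ b (A ∪ B))
    (hle : b A + b B ≤ l1 + l2) (hfin : l2 ≠ ⊤) :
    b (A ∩ B) = l1 := by
  refine le_antisymm ?_ hint
  have h : b (A ∩ B) + l2 ≤ l1 + l2 :=
    (add_le_add_right hun _).trans ((h2 A B).trans hle)
  exact (ENNReal.add_le_add_iff_right hfin).1 h

/-- The relation `≺_X` determined by the `⊆`-smallest optimal cuts `Xm` is a strict partial
order on `X`: it is irreflexive and transitive. Here `u ≺_X v` means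
`u ≠ v ∧ ¬ X_{u,v} ⊆ X`. -/
theorem precX_strict_partial_order {V : Type*} [Countable V] [Nonempty V]
    (b : Set V → ℝ≥0∞)
    (h0 : ∀ X : Set V, b X = 0 ↔ X = ∅ ∨ X = Set.univ)
    (h1 : ∀ X : Set V, b Xᶜ = b X)
    (h2 : ∀ X Y : Set V, b (X ∩ Y) + b (X ∪ Y) ≤ b X + b Y)
    (h3m : ∀ X : ℕ → Set V, Monotone X →
      Filter.Tendsto (fun n => b (X n)) Filter.atTop (nhds (b (⋃ n, X n))))
    (h3a : ∀ X : ℕ → Set V, Antitone X →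
      Filter.Tendsto (fun n => b (X n)) Filter.atTop (nhds (b (⋂ n, X n))))
    (h4 : ∀ u v : V, u ≠ v → lamB b u v < ⊤)
    (Xm : V → V → Set V)
    (hXm : ∀ u v : V, u ≠ v → IsLeast {Y : Set V | IsOptCut b u v Y} (Xm u v))
    (X : Set V) (hX : ∃ s t : V, s ≠ t ∧ IsOptCut b s t X) :
    (∀ u ∈ X, ¬ (u ≠ u ∧ ¬ Xm u u ⊆ X)) ∧
    (∀ u ∈ X, ∀ v ∈ X, ∀ w ∈ X,
      (u ≠ v ∧ ¬ Xm u v ⊆ X) → (v ≠ w ∧ ¬ Xm v w ⊆ X) → (u ≠ w ∧ ¬ Xm u w ⊆ X)) := by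
  obtain ⟨s, t, hst, hsX, htX, hbX⟩ := hX
  have hfin : ∀ u v : V, u ≠ v → lamB b u v ≠ ⊤ := fun u v h => (h4 u v h).ne
  -- L1 : if r ∉ Xm p q then Xm p q ⊆ Xm p r
  have L1 : ∀ p q r : V, p ≠ q → p ≠ r → r ∉ Xm p q → Xm p q ⊆ Xm p r := by
    intro p q r hpq hpr hr
    obtain ⟨⟨hp, hq, hb⟩, hmin⟩ := hXm p q hpq
    obtain ⟨⟨hp', hr', hb'⟩, -⟩ := hXm p r hpr
    have hint : lamB b p q ≤ b (Xm p q ∩ Xm p r) :=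
      lamB_le_cut b ⟨hp, hp'⟩ (fun h => hq h.1)
    have hun : lamB b p r ≤ b (Xm p q ∪ Xm p r) :=
      lamB_le_cut b (Or.inl hp) (fun h => h.elim hr hr')
    have hbint := uncross h2 hint hun (by rw [hb, hb']) (hfin p r hpr)
    have hopt : IsOptCut b p q (Xm p q ∩ Xm p r) :=
      ⟨⟨hp, hp'⟩, fun h => hq h.1, hbint⟩
    exact (hmin hopt).trans inter_subset_right
  -- B1 : if t ∉ Xm p q and p ∈ X then Xm p q ⊆ X
  have B1 : ∀ p q : V, p ≠ q → p ∈ X → t ∉ Xm p q → Xm p q ⊆ X := by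
    intro p q hpq hpX ht
    obtain ⟨⟨hp, hq, hb⟩, hmin⟩ := hXm p q hpq
    have hint : lamB b p q ≤ b (Xm p q ∩ X) :=
      lamB_le_cut b ⟨hp, hpX⟩ (fun h => hq h.1)
    have hun : lamB b s t ≤ b (Xm p q ∪ X) :=
      lamB_le_cut b (Or.inr hsX) (fun h => h.elim ht htX)
    have hbint := uncross h2 hint hun (by rw [hb, hbX]) (hfin s t hst)
    have hopt : IsOptCut b p q (Xm p q ∩ X) :=
      ⟨⟨hp, hpX⟩, fun h => hq h.1, hbint⟩
    exact (hmin hopt).trans inter_subset_right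
  -- B2 : if t ∈ Xm p q and q ∈ X then Xm q p ⊆ X
  have B2 : ∀ p q : V, p ≠ q → q ∈ X → t ∈ Xm p q → Xm q p ⊆ X := by
    intro p q hpq hqX ht
    obtain ⟨⟨hp, hq, hb⟩, -⟩ := hXm p q hpq
    obtain ⟨-, hmin⟩ := hXm q p hpq.symm
    have hbc : b (Xm p q)ᶜ = lamB b q p := by
      rw [h1, hb, lamB_comm h1]
    have hint : lamB b q p ≤ b ((Xm p q)ᶜ ∩ X) :=
      lamB_le_cut b ⟨hq, hqX⟩ (fun h => h.1 hp)
    have hun : lamB b s t ≤ b ((Xm p q)ᶜ ∪ X) :=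
      lamB_le_cut b (Or.inr hsX) (fun h => h.elim (fun hc => hc ht) htX)
    have hbint := uncross h2 hint hun (by rw [hbc, hbX]) (hfin s t hst)
    have hopt : IsOptCut b q p ((Xm p q)ᶜ ∩ X) :=
      ⟨⟨hq, hqX⟩, fun h => h.1 hp, hbint⟩
    exact (hmin hopt).trans inter_subset_right
  -- F1 : antisymmetry-type fact
  have F1 : ∀ p q : V, p ≠ q → p ∈ X → q ∈ X → ¬ Xm p q ⊆ X → Xm q p ⊆ X := by
    intro p q hpq hpX hqX hns
    by_cases ht : t ∈ Xm p q
    · exact B2 p q hpq hqX ht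
    · exact absurd (B1 p q hpq hpX ht) hns
  constructor
  · rintro u hu ⟨h, -⟩
    exact h rfl
  · rintro u hu v hv w hw ⟨huv, hA⟩ ⟨hvw, hB⟩
    have hvuX : Xm v u ⊆ X := F1 u v huv hu hv hA
    have huw : u ≠ w := by
      rintro rfl
      exact hB hvuX
    refine ⟨huw, fun hsub => ?_⟩
    -- w ∈ Xm u v
    have hwuv : w ∈ Xm u v := by
      by_contra h
      exact hA ((L1 u v w huv huw h).trans hsub)
    -- u ∈ Xm v w
    have huvw : u ∈ Xm v w := by
      by_contra h
      exact hB ((L1 v w u hvw huv.symm h).trans hvuX)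
    obtain ⟨⟨hv1, hw1, hb1⟩, hminvw⟩ := hXm v w hvw
    obtain ⟨⟨hu2, hv2, hb2⟩, hminuv⟩ := hXm u v huv
    obtain ⟨⟨hu3, hw3, hb3⟩, hminuw⟩ := hXm u w huw
    obtain ⟨⟨hv4, hu4, hb4⟩, -⟩ := hXm v u huv.symm
    -- λ(u,w) ≤ λ(v,w) since Xm v w is a u-w cut
    have hle1 : lamB b u w ≤ lamB b v w := hb1 ▸ lamB_le_cut b huvw hw1
    -- λ(v,w) ≤ λ(u,v) since Xm u v is a w-v cut
    have hle2 : lamB b v w ≤ lamB b u v := by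
      have h := lamB_le_cut b hwuv hv2
      rw [hb2] at h
      rw [lamB_comm h1 v w]
      exact h
    by_cases hvin : v ∈ Xm u w
    · -- uncross Xm v w with Xm u w : Xm v w ⊆ Xm u w ⊆ X, contradiction
      have hint : lamB b v w ≤ b (Xm v w ∩ Xm u w) :=
        lamB_le_cut b ⟨hv1, hvin⟩ (fun h => hw1 h.1)
      have hun : lamB b u w ≤ b (Xm v w ∪ Xm u w) :=
        lamB_le_cut b (Or.inr hu3) (fun h => h.elim hw1 hw3)
      have hbint := uncross h2 hint hun (by rw [hb1, hb3]) (hfin u w huw)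
      have hopt : IsOptCut b v w (Xm v w ∩ Xm u w) :=
        ⟨⟨hv1, hvin⟩, fun h => hw1 h.1, hbint⟩
      exact hB ((hminvw hopt).trans (inter_subset_right.trans hsub))
    · -- uncross Xm u w with (Xm v u)ᶜ : Xm u v ⊆ Xm u w ⊆ X, contradiction
      have hbc : b (Xm v u)ᶜ = lamB b u v := by
        rw [h1, hb4, lamB_comm h1]
      have hint : lamB b u v ≤ b (Xm u w ∩ (Xm v u)ᶜ) :=
        lamB_le_cut b ⟨hu3, hu4⟩ (fun h => hvin h.1)
      have hun : lamB b u v ≤ b (Xm u w ∪ (Xm v u)ᶜ) :=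
        lamB_le_cut b (Or.inl hu3) (fun h => h.elim hvin (fun hc => hc hv4))
      have hle : b (Xm u w) + b (Xm v u)ᶜ ≤ lamB b u v + lamB b u v := by
        rw [hb3, hbc]
        exact add_le_add_left (hle1.trans hle2) _
      have hbint := uncross h2 hint hun hle (hfin u v huv)
      have hopt : IsOptCut b u v (Xm u w ∩ (Xm v u)ᶜ) :=
        ⟨⟨hu3, hu4⟩, fun h => hvin h.1, hbint⟩
      exact hA ((hminuv hopt).trans (inter_subset_left.trans hsub))
end
end
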